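/- The empirical Bayes estimate σ̂_n² = n⁻¹(y − Bζ)ᵀ(BΛBᵀ + I)⁻¹(y − Bζ) can be rewritten as σ̂_n² = (1/n)Σ_{i=1}^n (y_i − f̄(x_i))² + (1/n)Σ_{j=1}^J n_j(ȳ_j − ζ_j)²/(1 + n_jλ_j²), where f̄(x) = Σ_j ȳ_j 1_{I_j}(x). -/

import Mathlib

open Matrix Finset

/-- The empirical Bayes estimate
`σ̂² = n⁻¹(y − Bζ)ᵀ(BΛBᵀ + I)⁻¹(y − Bζ)` can be rewritten as
`(1/n)Σ_i (y_i − f̄(x_i))² + (1/n)Σ_j n_j(ȳ_j − ζ_j)²/(1 + n_jλ_j²)`,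
where `f̄(x_i) = ȳ_{j(i)}`. -/
theorem empirical_bayes_variance_rewrite
    (n J : ℕ) (hn : 0 < n) (c : Fin n → Fin J) (y : Fin n → ℝ) (ζ : Fin J → ℝ)
    (lam : Fin J → ℝ) (hlam : ∀ j, 0 < lam j)
    (B : Matrix (Fin n) (Fin J) ℝ) (hB : ∀ i j, B i j = if c i = j then 1 else 0)
    (N : Fin J → ℕ) (hN : ∀ j, N j = (Finset.univ.filter (fun i => c i = j)).card)
    (hNpos : ∀ j, 1 ≤ N j)
    (ybar : Fin J → ℝ)
    (hybar : ∀ j, ybar j = (∑ i ∈ Finset.univ.filter (fun i => c i = j), y i) / N j)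
    (Λ : Matrix (Fin J) (Fin J) ℝ) (hΛ : Λ = Matrix.diagonal (fun j => lam j ^ 2))
    (z : Fin n → ℝ) (hz : z = y - B.mulVec ζ) :
    (n : ℝ)⁻¹ * (z ⬝ᵥ ((B * Λ * B.transpose + 1)⁻¹.mulVec z)) =
      (1 / n) * ∑ i, (y i - ybar (c i)) ^ 2 +
        (1 / n) * ∑ j, (N j : ℝ) * (ybar j - ζ j) ^ 2 / (1 + N j * lam j ^ 2) := by
  have hden : ∀ j, (0:ℝ) < 1 + N j * lam j ^ 2 := by
    intro j
    have : (0:ℝ) ≤ (N j : ℝ) * lam j ^ 2 := by positivity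
    linarith
  -- Bᵀ * B = diagonal N
  have hBtB : B.transpose * B = Matrix.diagonal (fun j => (N j : ℝ)) := by
    ext j k
    simp only [Matrix.mul_apply, Matrix.transpose_apply, hB, Matrix.diagonal_apply]
    by_cases hjk : j = k
    · subst hjk
      rw [if_pos rfl, hN j, Finset.card_filter]
      push_cast
      apply Finset.sum_congr rfl
      intro i _
      by_cases h : c i = j <;> simp [h]
    · simp only [if_neg hjk]
      apply Finset.sum_eq_zero
      intro i _
      by_cases h1 : c i = j <;> by_cases h2 : c i = k <;> simp_all
  set D : Matrix (Fin J) (Fin J) ℝ :=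
    Matrix.diagonal (fun j => lam j ^ 2 / (1 + N j * lam j ^ 2)) with hD
  set A : Matrix (Fin n) (Fin n) ℝ := 1 - B * D * B.transpose with hA
  have key : Λ * Matrix.diagonal (fun j => (N j : ℝ)) * D + D = Λ := by
    rw [hΛ, hD, Matrix.diagonal_mul_diagonal, Matrix.diagonal_mul_diagonal,
      Matrix.diagonal_add]
    refine congrArg Matrix.diagonal (funext fun j => ?_)
    have h := (hden j).ne'
    field_simp
    ring
  have hinv : (B * Λ * B.transpose + 1) * A = 1 := by
    have h2 : B * Λ * B.transpose * (B * D * B.transpose) + B * D * B.transpose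
        = B * Λ * B.transpose := by
      calc B * Λ * B.transpose * (B * D * B.transpose) + B * D * B.transpose
          = B * (Λ * (B.transpose * B) * D) * B.transpose + B * D * B.transpose := by
            simp only [Matrix.mul_assoc]
        _ = B * (Λ * (B.transpose * B) * D + D) * B.transpose := by
            rw [Matrix.mul_add, Matrix.add_mul]
        _ = B * Λ * B.transpose := by rw [hBtB, key]
    rw [hA, Matrix.mul_sub, Matrix.mul_one, Matrix.add_mul, Matrix.one_mul, h2]
    abel
  have hiA : (B * Λ * B.transpose + 1)⁻¹ = A := Matrix.inv_eq_right_inv hinv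
  -- pointwise form of z
  have hzi : ∀ i, z i = y i - ζ (c i) := by
    intro i
    rw [hz]
    simp only [Pi.sub_apply, Matrix.mulVec, dotProduct, hB]
    congr 1
    rw [Finset.sum_eq_single (c i)] <;> simp (config := {contextual := true}) [eq_comm]
  -- group sums of y
  have hSy : ∀ j, ∑ i ∈ Finset.univ.filter (fun i => c i = j), y i
      = (N j : ℝ) * ybar j := by
    intro j
    have hNne : ((N j : ℝ)) ≠ 0 := by
      have := hNpos j; positivity
    rw [hybar j]
    field_simp
  -- Bᵀ z
  have hw : ∀ j, B.transpose.mulVec z j = (N j : ℝ) * (ybar j - ζ j) := by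
    intro j
    simp only [Matrix.mulVec, dotProduct, Matrix.transpose_apply, hB]
    have : ∑ i, (if c i = j then (1:ℝ) else 0) * z i
        = ∑ i ∈ Finset.univ.filter (fun i => c i = j), z i := by
      rw [Finset.sum_filter]
      apply Finset.sum_congr rfl
      intro i _
      by_cases h : c i = j <;> simp [h]
    rw [this]
    have : ∑ i ∈ Finset.univ.filter (fun i => c i = j), z i
        = (∑ i ∈ Finset.univ.filter (fun i => c i = j), y i) - (N j : ℝ) * ζ j := by
      rw [Finset.sum_congr rfl (fun i hi => by
        rw [hzi i, (Finset.mem_filter.mp hi).2])]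
      rw [Finset.sum_sub_distrib, Finset.sum_const, ← hN j]
      simp [nsmul_eq_mul]
    rw [this, hSy j]
    ring
  -- quadratic form in A
  have hquad : z ⬝ᵥ A.mulVec z =
      (∑ i, z i ^ 2) -
        ∑ j, lam j ^ 2 / (1 + N j * lam j ^ 2) * ((N j : ℝ) * (ybar j - ζ j)) ^ 2 := by
    rw [hA, Matrix.sub_mulVec, Matrix.one_mulVec, dotProduct_sub]
    congr 1
    · simp [dotProduct, sq]
    · rw [show B * D * B.transpose = B * (D * B.transpose) from Matrix.mul_assoc B D B.transpose,
        ← Matrix.mulVec_mulVec, ← Matrix.mulVec_mulVec,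
        Matrix.dotProduct_mulVec, ← Matrix.mulVec_transpose]
      rw [hD]
      simp only [dotProduct, Matrix.mulVec_diagonal]
      apply Finset.sum_congr rfl
      intro j _
      rw [hw j]
      ring
  -- within-group sum of squares decomposition
  have hgrp : ∀ j, ∑ i ∈ Finset.univ.filter (fun i => c i = j), z i ^ 2
      = (∑ i ∈ Finset.univ.filter (fun i => c i = j), (y i - ybar (c i)) ^ 2)
        + (N j : ℝ) * (ybar j - ζ j) ^ 2 := by
    intro j
    have e1 : ∑ i ∈ Finset.univ.filter (fun i => c i = j), z i ^ 2
        = ∑ i ∈ Finset.univ.filter (fun i => c i = j),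
          ((y i - ybar j) ^ 2 + (2 * (ybar j - ζ j)) * y i
            + ((ζ j) ^ 2 - (ybar j) ^ 2)) := by
      apply Finset.sum_congr rfl
      intro i hi
      rw [hzi i, (Finset.mem_filter.mp hi).2]
      ring
    have e2 : ∑ i ∈ Finset.univ.filter (fun i => c i = j), (y i - ybar (c i)) ^ 2
        = ∑ i ∈ Finset.univ.filter (fun i => c i = j), (y i - ybar j) ^ 2 := by
      apply Finset.sum_congr rfl
      intro i hi
      rw [(Finset.mem_filter.mp hi).2]
    rw [e1, e2, Finset.sum_add_distrib, Finset.sum_add_distrib, ← Finset.mul_sum,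
      Finset.sum_const, ← hN j, hSy j, nsmul_eq_mul]
    ring
  -- put everything together
  rw [hiA, hquad]
  have hfib : ∑ i, z i ^ 2
      = ∑ j, ∑ i ∈ Finset.univ.filter (fun i => c i = j), z i ^ 2 := by
    rw [← Finset.sum_fiberwise Finset.univ c (fun i => z i ^ 2)]
  have hfib2 : ∑ i, (y i - ybar (c i)) ^ 2
      = ∑ j, ∑ i ∈ Finset.univ.filter (fun i => c i = j), (y i - ybar (c i)) ^ 2 := by
    rw [← Finset.sum_fiberwise Finset.univ c (fun i => (y i - ybar (c i)) ^ 2)]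
  rw [hfib, hfib2]
  rw [Finset.sum_congr rfl (fun j _ => hgrp j)]
  rw [Finset.sum_add_distrib]
  have hlast : ∑ j, (N j : ℝ) * (ybar j - ζ j) ^ 2
      - ∑ j, lam j ^ 2 / (1 + N j * lam j ^ 2) * ((N j : ℝ) * (ybar j - ζ j)) ^ 2
      = ∑ j, (N j : ℝ) * (ybar j - ζ j) ^ 2 / (1 + N j * lam j ^ 2) := by
    rw [← Finset.sum_sub_distrib]
    apply Finset.sum_congr rfl
    intro j _
    have := (hden j).ne'
    field_simp
    ring
  rw [one_div]
  rw [show ∀ a b d : ℝ, (a + b) - d = a + (b - d) from fun a b d => by ring]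
  rw [hlast]
  ring
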